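/- Let Δ be a prime, let n and m be positive integers with m ≤ n, and let P be a set of m points in [0, n) × [0, n) ⊆ ℝ². Assume that for every α > 0, every axis-aligned rectangle contained in [0, n − n/m] × [0, n − n/m] of area α·n²/m contains at least ⌊α/1.9⌋ and at most ⌈α/0.45⌉ points of P. Let μ be a real number with n/m ≤ μ ≤ n such that n/μ and μ·m/n are positive integers, and let G be the grid on [0, n) × [0, n) whose cells are the rectangles [j·μ, (j+1)·μ) × [h·γ, (h+1)·γ) with γ = n²/(m·μ), 0 ≤ j < n/μ and 0 ≤ h < μ·m/n. Let Q' be a finite set of points in [0, n) × [0, n), and let h₀ be the number of grid cells of G that contain at least one point of Q'. Then there exists a subset Q ⊆ Q' with |Q| ≥ (h₀ − 6n/μ − 6μm/n)/16 such that the incidence vectors {inc_P(q) : q ∈ Q} are linearly independent in (ZMod Δ)^P. -/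

import Mathlib

/-- The incidence vector of a query point `q` with respect to a finite point set `P`:
coordinate `p ∈ P` is `1` if `p` is dominated by `q` (i.e. `p.1 ≤ q.1` and `p.2 ≤ q.2`),
and `0` otherwise. -/
noncomputable def incVec (Δ : ℕ) (P : Finset (ℝ × ℝ)) (q : ℝ × ℝ) : P → ZMod Δ :=
  fun p => if p.1.1 ≤ q.1 ∧ p.1.2 ≤ q.2 then 1 else 0

open Classical in
lemma aux_li {F M ι : Type*} [Field F] (v : ι → (M → F)) (p : ι → M) (κ : ι → ℤ)
    (h1 : ∀ i, v i (p i) = 1)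
    (h0 : ∀ i j, i ≠ j → κ i ≤ κ j → v i (p j) = 0) :
    LinearIndependent F v := by
  rw [linearIndependent_iff']
  intro s g hsum i hi
  by_contra hgi
  have hne : (s.filter (fun i => g i ≠ 0)).Nonempty := ⟨i, by simp [hgi, hi]⟩
  obtain ⟨j, hj, hjmax⟩ := Finset.exists_max_image _ κ hne
  have hj' := Finset.mem_filter.mp hj
  have : (∑ k ∈ s, g k • v k) (p j) = g j := by
    rw [Finset.sum_apply]
    rw [Finset.sum_eq_single j]
    · simp [h1]
    · intro k hk hkj
      by_cases hgk : g k = 0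
      · simp [hgk]
      · have : κ k ≤ κ j := hjmax k (Finset.mem_filter.mpr ⟨hk, hgk⟩)
        simp [h0 k j hkj this]
    · intro h; exact absurd hj'.1 h
  rw [hsum] at this
  exact hj'.2 (by simpa using this.symm)

open Classical in
lemma aux_extract {F V A : Type*} [Nonempty A] [Field F] [AddCommGroup V] [Module F V]
    (Q' : Finset A) (f : A → V) {ι : Type*} [Fintype ι] (v : ι → V)
    (hv : LinearIndependent F v)
    (hrange : ∀ i, v i ∈ Submodule.span F (f '' (Q' : Set A))) :
    ∃ Q ⊆ Q', Fintype.card ι ≤ Q.card ∧ LinearIndependent F (fun q : Q => f q.1) := by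
  set s : Set V := f '' (Q' : Set A) with hs
  have hsfin : s.Finite := (Q'.finite_toSet).image f
  obtain ⟨t, hts, htspan, htli⟩ := exists_linearIndependent F s
  have htfin : t.Finite := hsfin.subset hts
  haveI : Fintype t := htfin.fintype
  haveI : FiniteDimensional F (Submodule.span F s) :=
    FiniteDimensional.span_of_finite F hsfin
  have hcard : Fintype.card ι ≤ Module.finrank F (Submodule.span F s) := by
    have hv' : LinearIndependent F (fun i => (⟨v i, hrange i⟩ : Submodule.span F s)) := by
      apply LinearIndependent.of_comp (Submodule.span F s).subtype
      exact hv
    exact hv'.fintype_card_le_finrank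
  have htcard : Module.finrank F (Submodule.span F s) = t.toFinset.card := by
    rw [← htspan, finrank_span_set_eq_card htli, Set.toFinset_card]
  have hex : ∀ x : V, ∃ q : A, x ∈ t → q ∈ Q' ∧ f q = x := by
    intro x
    by_cases hx : x ∈ t
    · obtain ⟨q, hq, hfq⟩ := hts hx
      exact ⟨q, fun _ => ⟨hq, hfq⟩⟩
    · exact ⟨Classical.arbitrary A, fun hxt => absurd hxt hx⟩
  choose g hg using hex
  refine ⟨t.toFinset.image g, ?_, ?_, ?_⟩
  · intro q hq
    obtain ⟨x, hx, rfl⟩ := Finset.mem_image.mp hq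
    exact (hg x (Set.mem_toFinset.mp hx)).1
  · rw [Finset.card_image_of_injOn]
    · omega
    · intro x hx y hy hxy
      have h1 := (hg x (Set.mem_toFinset.mp hx)).2
      have h2 := (hg y (Set.mem_toFinset.mp hy)).2
      rw [hxy, h2] at h1; exact h1.symm
  · set Q := t.toFinset.image g with hQdef
    have hmem : ∀ q : Q, f q.1 ∈ t := by
      rintro ⟨q, hq⟩
      obtain ⟨x, hx, rfl⟩ := Finset.mem_image.mp hq
      rw [(hg x (Set.mem_toFinset.mp hx)).2]
      exact Set.mem_toFinset.mp hx
    have : (fun q : Q => f q.1) = (fun x : t => (x : V)) ∘ (fun q : Q => ⟨f q.1, hmem q⟩) := rfl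
    rw [this]
    apply htli.comp
    rintro ⟨q, hq⟩ ⟨q', hq'⟩ h
    simp only [Subtype.mk.injEq] at h ⊢
    obtain ⟨x, hx, rfl⟩ := Finset.mem_image.mp hq
    obtain ⟨x', hx', rfl⟩ := Finset.mem_image.mp hq'
    have h1 := (hg x (Set.mem_toFinset.mp hx)).2
    have h2 := (hg x' (Set.mem_toFinset.mp hx')).2
    rw [h1, h2] at h; rw [h]

set_option maxHeartbeats 1000000 in
theorem stmt9 (Δ : ℕ) (hΔ : Δ.Prime) (n m : ℕ) (hn : 0 < n) (hm : 0 < m) (hmn : m ≤ n)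
    (P : Finset (ℝ × ℝ)) (hPcard : P.card = m)
    (hPrange : ∀ p ∈ P, 0 ≤ p.1 ∧ p.1 < (n : ℝ) ∧ 0 ≤ p.2 ∧ p.2 < (n : ℝ))
    -- the uniformity assumption on `P` (as for the scaled Fibonacci lattice):
    (hunif : ∀ α : ℝ, 0 < α →
      ∀ x₁ x₂ y₁ y₂ : ℝ, x₁ ≤ x₂ → y₁ ≤ y₂ →
        0 ≤ x₁ → x₂ ≤ (n : ℝ) - (n : ℝ) / m →
        0 ≤ y₁ → y₂ ≤ (n : ℝ) - (n : ℝ) / m →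
        (x₂ - x₁) * (y₂ - y₁) = α * (n : ℝ)^2 / m →
        ⌊α / 1.9⌋₊ ≤ (P.filter (fun p => x₁ ≤ p.1 ∧ p.1 ≤ x₂ ∧ y₁ ≤ p.2 ∧ p.2 ≤ y₂)).card ∧
          (P.filter (fun p => x₁ ≤ p.1 ∧ p.1 ≤ x₂ ∧ y₁ ≤ p.2 ∧ p.2 ≤ y₂)).card ≤ ⌈α / 0.45⌉₊)
    (μ γ : ℝ) (hμ₁ : (n : ℝ) / m ≤ μ) (hμ₂ : μ ≤ (n : ℝ))
    (hγ : γ = (n : ℝ)^2 / (m * μ))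
    (hcols : ∃ a : ℕ, 0 < a ∧ (a : ℝ) = (n : ℝ) / μ)
    (hrows : ∃ b : ℕ, 0 < b ∧ (b : ℝ) = μ * m / n)
    (Q' : Finset (ℝ × ℝ))
    (hQ'range : ∀ q ∈ Q', 0 ≤ q.1 ∧ q.1 < (n : ℝ) ∧ 0 ≤ q.2 ∧ q.2 < (n : ℝ))
    -- `h₀` is the hitting number of `Q'` on the grid with width `μ` and height `γ`:
    (h₀ : ℕ) (hh₀ : h₀ = (Q'.image (fun q => (⌊q.1 / μ⌋, ⌊q.2 / γ⌋))).card) :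
    ∃ Q ⊆ Q', ((h₀ : ℝ) - 6 * n / μ - 6 * μ * m / n) / 16 ≤ (Q.card : ℝ) ∧
      LinearIndependent (ZMod Δ) (fun q : Q => incVec Δ P q.1) := by
  classical
  haveI := Fact.mk hΔ
  obtain ⟨a, hapos, ha⟩ := hcols
  obtain ⟨b, hbpos, hb⟩ := hrows
  have hnR : (0:ℝ) < n := by exact_mod_cast hn
  have hmR : (0:ℝ) < m := by exact_mod_cast hm
  have hμpos : 0 < μ := lt_of_lt_of_le (div_pos hnR hmR) hμ₁
  have hγpos : 0 < γ := by rw [hγ]; positivity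
  have haμ : (a:ℝ) * μ = n := by rw [ha]; field_simp
  have hbγ : (b:ℝ) * γ = n := by rw [hb, hγ]; field_simp
  have hμγ : μ * γ = (n:ℝ)^2 / m := by rw [hγ]; field_simp
  have hγm : (n:ℝ)/m ≤ γ := by
    rw [hγ, div_le_div_iff₀ hmR (by positivity)]
    nlinarith [mul_le_mul_of_nonneg_left hμ₂ (mul_nonneg hnR.le hmR.le)]
  -- trivial case
  by_cases hcase : ((h₀:ℝ) - 6 * n / μ - 6 * μ * m / n) ≤ 0
  · refine ⟨∅, Finset.empty_subset _, ?_, ?_⟩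
    · simp only [Finset.card_empty, Nat.cast_zero]
      linarith
    · haveI : IsEmpty {x // x ∈ (∅ : Finset (ℝ×ℝ))} := by
        constructor; rintro ⟨x, hx⟩; exact absurd hx (Finset.notMem_empty x)
      exact linearIndependent_empty_type
  push_neg at hcase
  set S : Finset (ℤ×ℤ) := Q'.image (fun q => (⌊q.1 / μ⌋, ⌊q.2 / γ⌋)) with hS
  have hh₀' : h₀ = S.card := hh₀
  have hSb : ∀ c ∈ S, 0 ≤ c.1 ∧ c.1 < a ∧ 0 ≤ c.2 ∧ c.2 < b := by
    intro c hc
    obtain ⟨q, hq, rfl⟩ := Finset.mem_image.mp hc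
    obtain ⟨hq1, hq2, hq3, hq4⟩ := hQ'range q hq
    refine ⟨Int.floor_nonneg.mpr (div_nonneg hq1 hμpos.le), ?_,
      Int.floor_nonneg.mpr (div_nonneg hq3 hγpos.le), ?_⟩
    · rw [Int.floor_lt]
      push_cast
      rw [div_lt_iff₀ hμpos]
      linarith [haμ]
    · rw [Int.floor_lt]
      push_cast
      rw [div_lt_iff₀ hγpos]
      linarith [hbγ]
  have hexq : ∀ c : ℤ×ℤ, ∃ q : ℝ×ℝ, c ∈ S → q ∈ Q' ∧ (⌊q.1 / μ⌋, ⌊q.2 / γ⌋) = c := by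
    intro c
    by_cases hc : c ∈ S
    · obtain ⟨q, hq, hqc⟩ := Finset.mem_image.mp hc
      exact ⟨q, fun _ => ⟨hq, hqc⟩⟩
    · exact ⟨(0,0), fun h => absurd h hc⟩
  choose qc hqc using hexq
  have hqcoord : ∀ c ∈ S, (c.1:ℝ)*μ ≤ (qc c).1 ∧ (qc c).1 < (c.1+1)*μ ∧
      (c.2:ℝ)*γ ≤ (qc c).2 ∧ (qc c).2 < (c.2+1)*γ := by
    intro c hc
    have h1 : ⌊(qc c).1 / μ⌋ = c.1 := congrArg Prod.fst ((hqc c hc).2)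
    have h2 : ⌊(qc c).2 / γ⌋ = c.2 := congrArg Prod.snd ((hqc c hc).2)
    rw [Int.floor_eq_iff] at h1 h2
    · constructor
      · calc (c.1:ℝ)*μ ≤ ((qc c).1/μ)*μ := by
              apply mul_le_mul_of_nonneg_right h1.1 hμpos.le
        _ = (qc c).1 := by field_simp
      constructor
      · calc (qc c).1 = ((qc c).1/μ)*μ := by field_simp
        _ < ((c.1:ℝ)+1)*μ := by
              apply mul_lt_mul_of_pos_right _ hμpos
              exact_mod_cast h1.2
      constructor
      · calc (c.2:ℝ)*γ ≤ ((qc c).2/γ)*γ := by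
              apply mul_le_mul_of_nonneg_right h2.1 hγpos.le
        _ = (qc c).2 := by field_simp
      · calc (qc c).2 = ((qc c).2/γ)*γ := by field_simp
        _ < ((c.2:ℝ)+1)*γ := by
              apply mul_lt_mul_of_pos_right _ hγpos
              exact_mod_cast h2.2
  -- pigeonhole over 6 classes
  have hmaps : ∀ c ∈ S, (c.1 % 2, c.2 % 3) ∈ ((({0,1} : Finset ℤ) ×ˢ ({0,1,2} : Finset ℤ))) := by
    intro c _
    have h1 : 0 ≤ c.1 % 2 := Int.emod_nonneg _ (by norm_num)
    have h2 : c.1 % 2 < 2 := Int.emod_lt_of_pos _ (by norm_num)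
    have h3 : 0 ≤ c.2 % 3 := Int.emod_nonneg _ (by norm_num)
    have h4 : c.2 % 3 < 3 := Int.emod_lt_of_pos _ (by norm_num)
    simp only [Finset.mem_product, Finset.mem_insert, Finset.mem_singleton]
    omega
  have hsum : S.card = ∑ y ∈ (({0,1} : Finset ℤ) ×ˢ ({0,1,2} : Finset ℤ)),
      (S.filter (fun c => (c.1 % 2, c.2 % 3) = y)).card :=
    Finset.card_eq_sum_card_fiberwise hmaps
  obtain ⟨rs, _, hrs⟩ : ∃ rs ∈ (({0,1} : Finset ℤ) ×ˢ ({0,1,2} : Finset ℤ)),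
      S.card ≤ 6 * (S.filter (fun c => (c.1 % 2, c.2 % 3) = rs)).card := by
    apply Finset.exists_le_of_sum_le ⟨(0,0), by decide⟩
    rw [Finset.sum_const, ← Finset.mul_sum, ← hsum]
    norm_num [Finset.card_product]
  set Fb : Finset (ℤ×ℤ) := S.filter (fun c => (c.1 % 2, c.2 % 3) = rs) with hFb
  have hFbS : ∀ c ∈ Fb, c ∈ S := fun c hc => (Finset.mem_filter.mp hc).1
  have hFbkey : ∀ c ∈ Fb, c.1 % 2 = rs.1 ∧ c.2 % 3 = rs.2 := by
    intro c hc
    have := (Finset.mem_filter.mp hc).2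
    exact ⟨congrArg Prod.fst this, congrArg Prod.snd this⟩
  set T : Finset (ℤ×ℤ) := Fb.filter (fun c => 1 ≤ c.1) with hT
  have hTS : ∀ c ∈ T, c ∈ S := fun c hc => hFbS c (Finset.mem_filter.mp hc).1
  have hTFb : ∀ c ∈ T, c ∈ Fb := fun c hc => (Finset.mem_filter.mp hc).1
  have hT1 : ∀ c ∈ T, 1 ≤ c.1 := fun c hc => (Finset.mem_filter.mp hc).2
  have hFT : Fb.card ≤ T.card + b := by
    have h1 : T.card + (Fb.filter (fun c => ¬ 1 ≤ c.1)).card = Fb.card :=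
      Finset.card_filter_add_card_filter_not _
    have h2 : (Fb.filter (fun c => ¬ 1 ≤ c.1)).card ≤ b := by
      have hsub : Fb.filter (fun c => ¬ 1 ≤ c.1) ⊆ ({0} : Finset ℤ) ×ˢ Finset.Ico (0:ℤ) b := by
        intro c hc
        have hcS := hFbS c (Finset.mem_filter.mp hc).1
        have := hSb c hcS
        have hc1 := (Finset.mem_filter.mp hc).2
        simp only [Finset.mem_product, Finset.mem_singleton, Finset.mem_Ico]
        omega
      calc (Fb.filter (fun c => ¬ 1 ≤ c.1)).card ≤ _ := Finset.card_le_card hsub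
        _ = b := by
            rw [Finset.card_product, Finset.card_singleton, Int.card_Ico]
            simp
    omega
  set E : Finset (ℤ×ℤ) := T.filter (fun c => ∃ c' ∈ T, c'.1 = c.1 ∧ c'.2 < c.2) with hE
  have hET : ∀ c ∈ E, c ∈ T := fun c hc => (Finset.mem_filter.mp hc).1
  have hES : ∀ c ∈ E, c ∈ S := fun c hc => hTS c (hET c hc)
  have hTE : T.card ≤ E.card + a := by
    have h1 : E.card + (T.filter (fun c => ¬ ∃ c' ∈ T, c'.1 = c.1 ∧ c'.2 < c.2)).card = T.card :=
      Finset.card_filter_add_card_filter_not _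
    have h2 : (T.filter (fun c => ¬ ∃ c' ∈ T, c'.1 = c.1 ∧ c'.2 < c.2)).card ≤ a := by
      have hcard : (Finset.Ico (0:ℤ) (a:ℤ)).card = a := by rw [Int.card_Ico]; simp
      rw [← hcard]
      apply Finset.card_le_card_of_injOn Prod.fst ?_ ?_
      · intro c hc
        have := hSb c (hTS c (Finset.mem_filter.mp hc).1)
        simp only [Finset.mem_coe, Finset.mem_Ico]
        omega
      · intro c hc c' hc' hcc
        have hcT := (Finset.mem_filter.mp hc).1
        have hc'T := (Finset.mem_filter.mp hc').1
        have hcn := (Finset.mem_filter.mp hc).2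
        have hc'n := (Finset.mem_filter.mp hc').2
        rcases lt_trichotomy c.2 c'.2 with h | h | h
        · exact absurd ⟨c, hcT, hcc, h⟩ hc'n
        · exact Prod.ext hcc h
        · exact absurd ⟨c', hc'T, hcc.symm, h⟩ hcn
    omega
  -- predecessor within column
  have hexpr : ∀ c : ℤ×ℤ, ∃ d : ℤ×ℤ, c ∈ E → d ∈ T ∧ d.1 = c.1 ∧ d.2 < c.2 ∧
      ∀ c' ∈ T, c'.1 = c.1 → c'.2 < c.2 → c'.2 ≤ d.2 := by
    intro c
    by_cases hc : c ∈ E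
    · obtain ⟨c₀, hc₀T, hc₀1, hc₀2⟩ := (Finset.mem_filter.mp hc).2
      set W : Finset ℤ := (T.filter (fun d => d.1 = c.1 ∧ d.2 < c.2)).image Prod.snd with hW
      have hWne : W.Nonempty := ⟨c₀.2, Finset.mem_image.mpr ⟨c₀, Finset.mem_filter.mpr ⟨hc₀T, hc₀1, hc₀2⟩, rfl⟩⟩
      set mx := W.max' hWne with hmx
      obtain ⟨d, hd, hd2⟩ := Finset.mem_image.mp (W.max'_mem hWne)
      have hdT := (Finset.mem_filter.mp hd).1
      have hdp := (Finset.mem_filter.mp hd).2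
      refine ⟨d, fun _ => ⟨hdT, hdp.1, hdp.2, ?_⟩⟩
      intro c' hc'T h1 h2
      rw [hd2]
      exact W.le_max' _ (Finset.mem_image.mpr ⟨c', Finset.mem_filter.mpr ⟨hc'T, h1, h2⟩, rfl⟩)
    · exact ⟨(0,0), fun h => absurd h hc⟩
  choose pr hpr using hexpr
  have hgap : ∀ c ∈ E, (pr c).2 + 3 ≤ c.2 := by
    intro c hc
    have h1 := (hFbkey _ (hTFb _ ((hpr c hc).1))).2
    have h2 := (hFbkey _ (hTFb _ (hET c hc))).2
    have h3 := (hpr c hc).2.2.1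
    omega
  -- witness points
  have hexpt : ∀ c : ℤ×ℤ, ∃ p : ℝ×ℝ, c ∈ E → p ∈ P ∧
      ((c.1:ℝ)-1)*μ ≤ p.1 ∧ p.1 ≤ (c.1:ℝ)*μ ∧
      (((pr c).2:ℝ)+1)*γ ≤ p.2 ∧ p.2 ≤ (c.2:ℝ)*γ := by
    intro c
    by_cases hc : c ∈ E
    · have hj1 : 1 ≤ c.1 := hT1 c (hET c hc)
      have hbd := hSb c (hES c hc)
      have hbd' := hSb _ (hTS _ (hpr c hc).1)
      have hgapc := hgap c hc
      set α : ℝ := (c.2:ℝ) - ((pr c).2:ℝ) - 1 with hα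
      have hα2 : (2:ℝ) ≤ α := by
        rw [hα]
        have : ((pr c).2:ℝ) + 3 ≤ (c.2:ℝ) := by exact_mod_cast hgapc
        linarith
      have hαpos : 0 < α := by linarith
      have key := hunif α hαpos (((c.1:ℝ)-1)*μ) ((c.1:ℝ)*μ) ((((pr c).2:ℝ)+1)*γ) ((c.2:ℝ)*γ)
        (by nlinarith) (by nlinarith)
        (by
          have : (1:ℝ) ≤ (c.1:ℝ) := by exact_mod_cast hj1
          nlinarith)
        (by
          have h1 : (c.1:ℝ) ≤ (a:ℝ) - 1 := by
            have : c.1 + 1 ≤ (a:ℤ) := hbd.2.1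
            have := (Int.cast_le (R := ℝ)).mpr this
            push_cast at this
            linarith
          nlinarith [mul_le_mul_of_nonneg_right h1 hμpos.le])
        (by
          have h0 : (0:ℝ) ≤ ((pr c).2:ℝ) := by exact_mod_cast hbd'.2.2.1
          nlinarith)
        (by
          have h1 : (c.2:ℝ) ≤ (b:ℝ) - 1 := by
            have : c.2 + 1 ≤ (b:ℤ) := hbd.2.2.2
            have := (Int.cast_le (R := ℝ)).mpr this
            push_cast at this
            linarith
          nlinarith [mul_le_mul_of_nonneg_right h1 hγpos.le])
        (by
          have : ((c.1:ℝ)*μ - ((c.1:ℝ)-1)*μ) * ((c.2:ℝ)*γ - (((pr c).2:ℝ)+1)*γ) = α * (μ * γ) := by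
            ring
          rw [this, hμγ]
          ring)
      have hlow : 1 ≤ ⌊α / 1.9⌋₊ := by
        apply Nat.le_floor
        rw [le_div_iff₀ (by norm_num)]
        push_cast
        linarith
      have hpos : 0 < (P.filter (fun p => ((c.1:ℝ)-1)*μ ≤ p.1 ∧ p.1 ≤ (c.1:ℝ)*μ ∧
          (((pr c).2:ℝ)+1)*γ ≤ p.2 ∧ p.2 ≤ (c.2:ℝ)*γ)).card := by
        calc 0 < 1 := one_pos
        _ ≤ ⌊α / 1.9⌋₊ := hlow
        _ ≤ _ := key.1
      obtain ⟨p, hp⟩ := Finset.card_pos.mp hpos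
      have hp' := Finset.mem_filter.mp hp
      exact ⟨p, fun _ => ⟨hp'.1, hp'.2.1, hp'.2.2.1, hp'.2.2.2.1, hp'.2.2.2.2⟩⟩
    · exact ⟨(0,0), fun h => absurd h hc⟩
  choose pt hpt using hexpt
  -- the difference family
  set v : {x // x ∈ E} → (P → ZMod Δ) :=
    fun i => incVec Δ P (qc i.1) - incVec Δ P (qc (pr i.1)) with hv
  have hprS : ∀ c ∈ E, pr c ∈ S := fun c hc => hTS _ (hpr c hc).1
  have hmul : ∀ (x y : ℤ) (t : ℝ), 0 ≤ t → x ≤ y → (x:ℝ)*t ≤ (y:ℝ)*t := by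
    intro x y t ht hxy
    exact mul_le_mul_of_nonneg_right (by exact_mod_cast hxy) ht
  have hli : LinearIndependent (ZMod Δ) v := by
    apply aux_li v (fun i => (⟨pt i.1, (hpt i.1 i.2).1⟩ : {x // x ∈ P})) (fun i => i.1.1)
    · -- diagonal = 1
      rintro ⟨c, hc⟩
      obtain ⟨hptP, hpt1, hpt2, hpt3, hpt4⟩ := hpt c hc
      obtain ⟨hq1, hq2, hq3, hq4⟩ := hqcoord c (hES c hc)
      obtain ⟨hr1, hr2, hr3, hr4⟩ := hqcoord (pr c) (hprS c hc)
      simp only [hv, Pi.sub_apply, incVec]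
      rw [if_pos ⟨le_trans hpt2 hq1, le_trans hpt4 hq3⟩, if_neg]
      · norm_num
      · rintro ⟨-, hdom2⟩
        have : (qc (pr c)).2 < (((pr c).2:ℝ)+1)*γ := by exact_mod_cast hr4
        linarith
    · -- off-diagonal with smaller-or-equal column = 0
      rintro ⟨c', hc'⟩ ⟨c, hc⟩ hne hκ
      simp only [ne_eq, Subtype.mk.injEq] at hne
      simp only at hκ
      obtain ⟨hptP, hpt1, hpt2, hpt3, hpt4⟩ := hpt c hc
      obtain ⟨hq1, hq2, hq3, hq4⟩ := hqcoord c' (hES c' hc')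
      obtain ⟨hr1, hr2, hr3, hr4⟩ := hqcoord (pr c') (hprS c' hc')
      have hprc'1 : (pr c').1 = c'.1 := (hpr c' hc').2.1
      simp only [hv, Pi.sub_apply, incVec]
      rcases lt_or_eq_of_le hκ with hlt | heq
      · -- strictly smaller column: both terms 0
        have hpar : c'.1 % 2 = c.1 % 2 := by
          rw [(hFbkey _ (hTFb _ (hET c' hc'))).1, (hFbkey _ (hTFb _ (hET c hc))).1]
        have h2 : c'.1 + 1 ≤ c.1 - 1 := by omega
        have hx : ((c'.1:ℝ)+1)*μ ≤ ((c.1:ℝ)-1)*μ := by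
          have := hmul (c'.1+1) (c.1-1) μ hμpos.le h2
          push_cast at this ⊢
          linarith
        rw [if_neg, if_neg, sub_zero]
        · rintro ⟨hdom1, -⟩
          rw [hprc'1] at hr2
          linarith
        · rintro ⟨hdom1, -⟩
          linarith
      · -- same column
        have hcol : c'.1 = c.1 := heq
        have hne2 : c'.2 ≠ c.2 := by
          intro h
          exact hne (Prod.ext hcol h)
        rcases lt_or_gt_of_ne hne2 with hlt2 | hgt2
        · -- c'.2 < c.2 : both terms 0 (rows too low)
          have hmax := (hpr c hc).2.2.2 c' (hET c' hc') hcol hlt2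
          have hy : ((c'.2:ℝ)+1)*γ ≤ (((pr c).2:ℝ)+1)*γ := by
            have := hmul (c'.2+1) ((pr c).2+1) γ hγpos.le (by omega)
            push_cast at this ⊢
            linarith
          have hy' : (((pr c').2:ℝ)+1)*γ ≤ (((pr c).2:ℝ)+1)*γ := by
            have hlt3 : (pr c').2 < c'.2 := (hpr c' hc').2.2.1
            have := hmul ((pr c').2+1) ((pr c).2+1) γ hγpos.le (by omega)
            push_cast at this ⊢
            linarith
          rw [if_neg, if_neg, sub_zero]
          · rintro ⟨-, hdom2⟩
            linarith
          · rintro ⟨-, hdom2⟩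
            linarith
        · -- c.2 < c'.2 : both terms 1
          have hmax := (hpr c' hc').2.2.2 c (hET c hc) hcol.symm hgt2
          rw [if_pos, if_pos, sub_self]
          · constructor
            · have heqm : ((pr c').1:ℝ)*μ = (c.1:ℝ)*μ := by rw [hprc'1, hcol]
              rw [heqm] at hr1
              exact le_trans hpt2 hr1
            · calc (pt c).2 ≤ (c.2:ℝ)*γ := hpt4
              _ ≤ ((pr c').2:ℝ)*γ := hmul c.2 (pr c').2 γ hγpos.le hmax
              _ ≤ (qc (pr c')).2 := hr3
          · constructor
            · have heqm : ((c'.1:ℝ))*μ = (c.1:ℝ)*μ := by rw [hcol]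
              rw [heqm] at hq1
              exact le_trans hpt2 hq1
            · calc (pt c).2 ≤ (c.2:ℝ)*γ := hpt4
              _ ≤ (c'.2:ℝ)*γ := hmul c.2 c'.2 γ hγpos.le hgt2.le
              _ ≤ (qc c').2 := hq3
  -- extract Q
  obtain ⟨Q, hQsub, hQcard, hQli⟩ := aux_extract Q' (incVec Δ P) v hli (by
    rintro ⟨c, hc⟩
    apply sub_mem
    · exact Submodule.subset_span ⟨qc c, by simpa using (hqc c (hES c hc)).1, rfl⟩
    · exact Submodule.subset_span ⟨qc (pr c), by simpa using (hqc (pr c) (hprS c hc)).1, rfl⟩)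
  refine ⟨Q, hQsub, ?_, hQli⟩
  -- counting
  have hEQ : E.card ≤ Q.card := by
    rwa [Fintype.card_coe] at hQcard
  have hchain : (h₀:ℝ) ≤ 6*Q.card + 6*a + 6*b := by
    have : h₀ ≤ 6 * (Q.card + a + b) := by
      rw [hh₀']
      calc S.card ≤ 6 * Fb.card := hrs
      _ ≤ 6 * (Q.card + a + b) := by omega
    calc (h₀:ℝ) ≤ ((6 * (Q.card + a + b) : ℕ) : ℝ) := by exact_mod_cast this
    _ = 6*Q.card + 6*a + 6*b := by push_cast; ring
  have h6a : 6 * (n:ℝ) / μ = 6*(a:ℝ) := by rw [ha]; ring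
  have h6b : 6 * μ * (m:ℝ) / n = 6*(b:ℝ) := by rw [hb]; ring
  rw [h6a, h6b] at hcase ⊢
  linarith
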